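/- For a fixed δ ∈ S, the set of conditions p ∈ P whose domain contains δ ∪ {η_δ(i) : i < ω₁} is dense in P. -/

import Mathlib

noncomputable def om1 : Ordinal := (Cardinal.aleph 1).ord
noncomputable def om2 : Ordinal := (Cardinal.aleph 2).ord

/-- A club (closed unbounded) subset of the ordinal `Λ`. -/
def IsClubIn (Λ : Ordinal) (C : Set Ordinal) : Prop :=
  C ⊆ Set.Iio Λ ∧ (∀ a < Λ, ∃ b ∈ C, a ≤ b) ∧
    (∀ a, a < Λ → a ≠ 0 → (∀ b < a, ∃ c ∈ C, b ≤ c ∧ c < a) → a ∈ C)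

/-- `T` is non-stationary in `Λ`. -/
def NonStatIn (Λ : Ordinal) (T : Set Ordinal) : Prop :=
  ∃ C : Set Ordinal, IsClubIn Λ C ∧ T ∩ C = ∅

/-- Conditions of the uniformization forcing: partial functions `p : ω₂ ⇀ 2`
    (coded as `Ordinal → Option Bool`) with domain of size `≤ ℵ₁` such that
    for every `δ ∈ S` the error set
    `{i ∈ E₀ : η_δ(i) ∈ dom p ∧ p(η_δ(i)) ≠ c_δ(i)}` is non-stationary. -/
def IsCond (S : Set Ordinal) (η : Ordinal → Ordinal → Ordinal)
    (c : Ordinal → Ordinal → Bool) (E₀ : Set Ordinal)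
    (p : Ordinal → Option Bool) : Prop :=
  (∀ α, p α ≠ none → α < om2) ∧
  Cardinal.mk ↥{α | p α ≠ none} ≤ Cardinal.aleph 1 ∧
  ∀ δ ∈ S, NonStatIn om1
    {i | i < om1 ∧ i ∈ E₀ ∧ ∃ b, p (η δ i) = some b ∧ b ≠ c δ i}

/-- `q` extends `p` (i.e. `q ≤ p` in the reverse-inclusion order). -/
def Extends (q p : Ordinal → Option Bool) : Prop :=
  ∀ α b, p α = some b → q α = some b

lemma isClubIn_tail {Λ β : Ordinal} (hβ : β < Λ) :
    IsClubIn Λ {x | β ≤ x ∧ x < Λ} := by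
  refine ⟨fun x hx => hx.2, fun a ha => ⟨max a β, ⟨le_max_right _ _, max_lt ha hβ⟩,
    le_max_left _ _⟩, ?_⟩
  intro a haΛ ha0 hcl
  obtain ⟨cc, hcc, -, hca⟩ := hcl 0 (pos_iff_ne_zero.2 ha0)
  exact ⟨hcc.1.trans hca.le, haΛ⟩

lemma clubIn_bound {Λ : Ordinal} {C : Set Ordinal} (h : IsClubIn Λ C) (hΛ : 0 < Λ) :
    ∃ β, β < Λ ∧ ∀ x, β ≤ x → x < Λ → x ∈ C := by
  obtain ⟨b₀, hb₀C, -⟩ := h.2.1 0 hΛ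
  refine ⟨b₀, h.1 hb₀C, ?_⟩
  intro x
  induction x using Ordinal.induction with
  | h x IH =>
    intro hbx hxΛ
    rcases eq_or_lt_of_le hbx with rfl | hlt
    · exact hb₀C
    · refine h.2.2 x hxΛ
        (pos_iff_ne_zero.1 ((zero_le (a := b₀)).trans_lt hlt)) ?_
      intro b hb
      rcases le_or_gt b b₀ with hbb | hbb
      · exact ⟨b₀, hb₀C, hbb, hlt⟩
      · exact ⟨b, IH b hb hbb.le (hb.trans hxΛ), le_refl b, hb⟩

lemma nonStatIn_of_bound {Λ : Ordinal} {T : Set Ordinal} (β : Ordinal) (hβ : β < Λ)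
    (h : ∀ x, β ≤ x → x < Λ → x ∉ T) : NonStatIn Λ T := by
  refine ⟨{x | β ≤ x ∧ x < Λ}, isClubIn_tail hβ, ?_⟩
  ext x
  simp only [Set.mem_inter_iff, Set.mem_setOf_eq, Set.mem_empty_iff_false, iff_false, not_and]
  exact fun hxT hx1 hx2 => h x hx1 hx2 hxT

lemma bound_of_nonStatIn {Λ : Ordinal} {T : Set Ordinal} (hΛ : 0 < Λ)
    (h : NonStatIn Λ T) : ∃ β, β < Λ ∧ ∀ x, β ≤ x → x < Λ → x ∉ T := by
  obtain ⟨C, hC, hTC⟩ := h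
  obtain ⟨β, hβ, hall⟩ := clubIn_bound hC hΛ
  exact ⟨β, hβ, fun x h1 h2 hxT =>
    (Set.eq_empty_iff_forall_notMem.1 hTC x) ⟨hxT, hall x h1 h2⟩⟩

lemma om1_pos : (0 : Ordinal) < om1 := by
  unfold om1
  rw [Cardinal.lt_ord, Ordinal.card_zero]
  exact (Cardinal.aleph_pos 1)

/-- For a fixed `δ ∈ S`, the set of conditions whose domain contains
    `δ ∪ {η_δ(i) : i < ω₁}` is dense in the uniformization forcing `P`. -/
theorem stmt15
    (S : Set Ordinal)
    (hS : ∀ δ ∈ S, δ < om2 ∧ δ.cof = Cardinal.aleph 1)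
    (η : Ordinal → Ordinal → Ordinal)
    (hlt : ∀ δ ∈ S, ∀ i < om1, η δ i < δ)
    (hmono : ∀ δ ∈ S, ∀ i j : Ordinal, i < j → j < om1 → η δ i < η δ j)
    (hcont : ∀ δ ∈ S, ∀ γ, γ < om1 → Order.IsSuccLimit γ → η δ γ = sSup (η δ '' Set.Iio γ))
    (hcofinal : ∀ δ ∈ S, ∀ β < δ, ∃ i, i < om1 ∧ β ≤ η δ i)
    (c : Ordinal → Ordinal → Bool) (E₀ : Set Ordinal) (hE₀ : E₀ ⊆ Set.Iio om1)
    (δ : Ordinal) (hδ : δ ∈ S)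
    (p : Ordinal → Option Bool) (hp : IsCond S η c E₀ p) :
    ∃ q : Ordinal → Option Bool, IsCond S η c E₀ q ∧ Extends q p ∧
      (∀ β < δ, q β ≠ none) ∧ (∀ i < om1, q (η δ i) ≠ none) := by
  classical
  obtain ⟨hδ2, hδcof⟩ := hS δ hδ
  have h2ord : (2 : Ordinal) = Order.succ 1 := by
    rw [← Ordinal.add_one_eq_succ, one_add_one_eq_two]
  have hcard_le : ∀ x : Ordinal, x < om2 → x.card ≤ Cardinal.aleph 1 := by
    intro x hx
    have h := Cardinal.lt_ord.1 hx
    rwa [h2ord, Cardinal.aleph_succ, Order.lt_succ_iff] at h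
  have hmle : ∀ d ∈ S, ∀ i j : Ordinal, i ≤ j → j < om1 → η d i ≤ η d j := by
    intro d hd i j hij hj
    rcases eq_or_lt_of_le hij with rfl | h
    · exact le_rfl
    · exact (hmono d hd i j h hj).le
  have hltrev : ∀ d ∈ S, ∀ i i₁ : Ordinal, i₁ < om1 → i < om1 →
      η d i < η d i₁ → i < i₁ := by
    intro d hd i i₁ hi₁ hi h
    by_contra hcon
    push_neg at hcon
    exact absurd h (not_lt.2 (hmle d hd i₁ i hcon hi))
  have hinj : ∀ d ∈ S, ∀ i j, i < om1 → j < om1 → η d i = η d j → i = j := by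
    intro d hd i j hi hj hij
    rcases lt_trichotomy i j with h | h | h
    · exact absurd hij (hmono d hd i j h hj).ne
    · exact h
    · exact absurd hij.symm (hmono d hd j i h hi).ne
  set D : Set Ordinal := {d | d ∈ S ∧ d ≤ δ} with hDdef
  -- an injection from D into Iio om1 (in the index universe)
  have hmkD : Nonempty (↥D ↪ ↥(Set.Iio (om1 : Ordinal.{u_2}))) := by
    apply Cardinal.lift_mk_le'.1
    have hom2lim : Order.IsSuccLimit om2 := Cardinal.isSuccLimit_ord (Cardinal.aleph0_le_aleph 2)
    have hδ1 : δ + 1 < om2 := by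
      rw [Ordinal.add_one_eq_succ]
      exact hom2lim.succ_lt hδ2
    have h1 : Cardinal.mk ↥D ≤ Cardinal.lift.{u_1+1} (Cardinal.aleph 1 : Cardinal.{u_1}) := by
      calc Cardinal.mk ↥D ≤ Cardinal.mk ↥(Set.Iio (δ + 1)) :=
            Cardinal.mk_le_mk_of_subset (fun x hx => lt_of_le_of_lt hx.2
              (by rw [Ordinal.add_one_eq_succ]; exact Order.lt_succ δ))
        _ = Cardinal.lift.{u_1+1} (δ + 1).card := Ordinal.mk_Iio_ordinal _
        _ ≤ Cardinal.lift.{u_1+1} (Cardinal.aleph 1 : Cardinal.{u_1}) :=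
            Cardinal.lift_le.2 (hcard_le _ hδ1)
    have h2 : Cardinal.mk ↥(Set.Iio (om1 : Ordinal.{u_2}))
        = Cardinal.lift.{u_2+1} (Cardinal.aleph 1 : Cardinal.{u_2}) := by
      rw [Ordinal.mk_Iio_ordinal]
      unfold om1
      rw [Cardinal.card_ord]
    rw [h2]
    calc Cardinal.lift.{u_2+1} (Cardinal.mk ↥D)
        ≤ Cardinal.lift.{u_2+1} (Cardinal.lift.{u_1+1} (Cardinal.aleph 1 : Cardinal.{u_1})) :=
          Cardinal.lift_le.2 h1
      _ = Cardinal.lift.{u_1+1} (Cardinal.lift.{u_2+1} (Cardinal.aleph 1 : Cardinal.{u_2})) := by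
          simp [Cardinal.lift_lift, Cardinal.lift_aleph, Ordinal.lift_one]
  obtain ⟨e⟩ := hmkD
  set ι : Ordinal → Ordinal := fun d => if h : d ∈ D then (e ⟨d, h⟩ : Ordinal) else 0 with hιdef
  have hιlt : ∀ d ∈ D, ι d < om1 := by
    intro d hd
    simp only [hιdef, dif_pos hd]
    exact (e ⟨d, hd⟩).2
  have hιinj : ∀ d ∈ D, ∀ d' ∈ D, ι d = ι d' → d = d' := by
    intro d hd d' hd' h
    simp only [hιdef, dif_pos hd, dif_pos hd'] at h
    have h2 := e.injective (Subtype.ext h)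
    exact congrArg Subtype.val h2
  -- ladder points through α
  set T : Ordinal → Set Ordinal := fun α => {d | d ∈ D ∧ ∃ i, i < om1 ∧ η d i = α} with hTdef
  have hmin : ∀ α, (T α).Nonempty → ∃ d, d ∈ T α ∧ ∀ d' ∈ T α, ι d ≤ ι d' := by
    intro α hne
    have h2 : (ι '' T α).Nonempty := hne.image ι
    obtain ⟨d, hd, hdi⟩ := csInf_mem h2
    refine ⟨d, hd, fun d' hd' => ?_⟩
    rw [hdi]
    exact csInf_le (OrderBot.bddBelow _) ⟨d', hd', rfl⟩
  set val : Ordinal → Bool := fun α =>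
    if h : ∃ d, d ∈ T α ∧ ∀ d' ∈ T α, ι d ≤ ι d' then
      c h.choose h.choose_spec.1.2.choose
    else false with hvaldef
  set q : Ordinal → Option Bool := fun α =>
    if p α = none then (if α < δ then some (val α) else none) else p α with hqdef
  -- basic facts about q
  have hqp : ∀ α, p α ≠ none → q α = p α := by
    intro α h
    simp only [hqdef, if_neg h]
  have hqnew : ∀ α, p α = none → α < δ → q α = some (val α) := by
    intro α h hα
    simp only [hqdef, if_pos h, if_pos hα]
  have hqout : ∀ α, p α = none → ¬ α < δ → q α = none := by
    intro α h hα
    simp only [hqdef, if_pos h, if_neg hα]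
  -- analysis of the value at a new ladder point
  have hval : ∀ δ'' ∈ S, δ'' ≤ δ → ∀ i, i < om1 →
      val (η δ'' i) = c δ'' i ∨
      ∃ d', d' ∈ D ∧ d' ≠ δ'' ∧ ι d' < ι δ'' ∧ ∃ j, j < om1 ∧ η d' j = η δ'' i := by
    intro δ'' hδ'' hle i hi
    have hδ''D : δ'' ∈ D := ⟨hδ'', hle⟩
    have hT : δ'' ∈ T (η δ'' i) := ⟨hδ''D, i, hi, rfl⟩
    have hex : ∃ d, d ∈ T (η δ'' i) ∧ ∀ d' ∈ T (η δ'' i), ι d ≤ ι d' :=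
      hmin _ ⟨δ'', hT⟩
    obtain ⟨d₀, i₀, hvala, hd₀D, hd₀min, hi₀1, hi₀2⟩ :
        ∃ d₀ i₀, val (η δ'' i) = c d₀ i₀ ∧ d₀ ∈ D ∧
          (∀ d' ∈ T (η δ'' i), ι d₀ ≤ ι d') ∧ i₀ < om1 ∧ η d₀ i₀ = η δ'' i :=
      ⟨hex.choose, hex.choose_spec.1.2.choose, by simp only [hvaldef, dif_pos hex],
        hex.choose_spec.1.1, hex.choose_spec.2,
        hex.choose_spec.1.2.choose_spec.1, hex.choose_spec.1.2.choose_spec.2⟩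
    by_cases hd : d₀ = δ''
    · left
      have hii : i₀ = i := by
        exact hinj δ'' hδ'' _ i hi₀1 hi (hd ▸ hi₀2)
      exact hvala.trans (congrArg₂ c hd hii)
    · right
      refine ⟨d₀, hd₀D, hd, ?_, i₀, hi₀1, hi₀2⟩
      exact lt_of_le_of_ne (hd₀min δ'' hT)
        (fun h => hd (hιinj _ hd₀D δ'' hδ''D h))
  -- overlap of distinct ladders is index-bounded
  have hover : ∀ δ'' ∈ S, ∀ d' ∈ D, d' ≠ δ'' →
      ∃ i₁, i₁ < om1 ∧ ∀ i, i < om1 → (∃ j, j < om1 ∧ η d' j = η δ'' i) → i < i₁ := by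
    intro δ'' hδ'' d' hd' hne
    rcases hne.lt_or_gt with hlt' | hgt
    · -- d' < δ''
      obtain ⟨i₁, hi₁, hle1⟩ := hcofinal δ'' hδ'' d' hlt'
      refine ⟨i₁, hi₁, ?_⟩
      rintro i hi ⟨j, hj, hji⟩
      have h1 : η δ'' i < d' := hji ▸ hlt d' hd'.1 j hj
      exact hltrev δ'' hδ'' i i₁ hi₁ hi (h1.trans_le hle1)
    · -- δ'' < d'
      set J : Set Ordinal := {j | j < om1 ∧ δ'' ≤ η d' j} with hJdef
      have hJne : J.Nonempty := by
        obtain ⟨j, hj1, hj2⟩ := hcofinal d' hd'.1 δ'' hgt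
        exact ⟨j, hj1, hj2⟩
      have hj₀ : sInf J ∈ J := csInf_mem hJne
      set X : Set Ordinal := {x | x < δ'' ∧ ∃ j, j < om1 ∧ η d' j = x} with hXdef
      have hemb : Nonempty (↥X ↪ ↥(Set.Iio (sInf J))) := by
        have hch : ∀ x : ↥X, ∃ j, j < sInf J ∧ η d' j = x.1 := by
          rintro ⟨x, hx1, j, hj, hjx⟩
          refine ⟨j, ?_, hjx⟩
          refine hltrev d' hd'.1 j (sInf J) hj₀.1 hj ?_
          exact lt_of_lt_of_le (hjx ▸ hx1 : η d' j < δ'') hj₀.2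
        choose jf hjf1 hjf2 using hch
        refine ⟨⟨fun x => ⟨jf x, hjf1 x⟩, ?_⟩⟩
        intro x y hxy
        have hj : jf x = jf y := congrArg Subtype.val hxy
        apply Subtype.ext
        rw [← hjf2 x, ← hjf2 y, hj]
      have hXlt : Cardinal.lift.{u_2+1} (Cardinal.mk ↥X)
          < Cardinal.lift.{u_2+1} (Cardinal.aleph 1 : Cardinal.{u_1+1}) := by
        calc Cardinal.lift.{u_2+1} (Cardinal.mk ↥X)
            ≤ Cardinal.lift.{u_1+1} (Cardinal.mk ↥(Set.Iio (sInf J))) :=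
              Cardinal.lift_mk_le'.2 hemb
          _ = Cardinal.lift.{u_1+1} (Cardinal.lift.{u_2+1} (sInf J).card) := by
              rw [Ordinal.mk_Iio_ordinal]
          _ < Cardinal.lift.{u_1+1} (Cardinal.lift.{u_2+1}
                (Cardinal.aleph 1 : Cardinal.{u_2})) := by
              exact Cardinal.lift_lt.2 (Cardinal.lift_lt.2 (Cardinal.lt_ord.1 hj₀.1))
          _ = Cardinal.lift.{u_2+1} (Cardinal.aleph 1 : Cardinal.{u_1+1}) := by
              simp [Cardinal.lift_lift, Cardinal.lift_aleph, Ordinal.lift_one]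
      have hXcount : X.Countable :=
        (Cardinal.countable_iff_lt_aleph_one X).2 (Cardinal.lift_lt.1 hXlt)
      rcases X.eq_empty_or_nonempty with hXe | hXne
      · refine ⟨0, om1_pos, ?_⟩
        rintro i hi ⟨j, hj, hji⟩
        exfalso
        have hmem : η δ'' i ∈ X := ⟨hlt δ'' hδ'' i hi, j, hj, hji⟩
        rw [hXe] at hmem
        exact hmem
      · obtain ⟨fX, hfX⟩ := hXcount.exists_eq_range hXne
        have hfXlt : ∀ n, fX n < δ'' := by
          intro n
          have : fX n ∈ X := hfX ▸ Set.mem_range_self n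
          exact this.1
        have hs_le : Ordinal.lsub fX ≤ δ'' := Ordinal.lsub_le hfXlt
        have hs_lt : Ordinal.lsub fX < δ'' := by
          rcases lt_or_eq_of_le hs_le with h | h
          · exact h
          · exfalso
            have hcof := Ordinal.cof_lsub_le_lift fX
            rw [h, (hS δ'' hδ'').2] at hcof
            rw [Cardinal.mk_nat, Cardinal.lift_aleph0] at hcof
            exact absurd (lt_of_le_of_lt hcof Cardinal.aleph0_lt_aleph_one)
              (lt_irrefl _)
        obtain ⟨i₁, hi₁, hile⟩ := hcofinal δ'' hδ'' (Ordinal.lsub fX) hs_lt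
        refine ⟨i₁, hi₁, ?_⟩
        rintro i hi ⟨j, hj, hji⟩
        have hmem : η δ'' i ∈ X := ⟨hlt δ'' hδ'' i hi, j, hj, hji⟩
        rw [hfX] at hmem
        obtain ⟨n, hn⟩ := hmem
        have h1 : η δ'' i < Ordinal.lsub fX := hn ▸ Ordinal.lt_lsub fX n
        exact hltrev δ'' hδ'' i i₁ hi₁ hi (h1.trans_le hile)
  -- the error sets of q are bounded
  have hC3 : ∀ δ'' ∈ S, NonStatIn om1
      {i | i < om1 ∧ i ∈ E₀ ∧ ∃ b, q (η δ'' i) = some b ∧ b ≠ c δ'' i} := by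
    intro δ'' hδ''
    obtain ⟨βp, hβp, hβpall⟩ := bound_of_nonStatIn om1_pos (hp.2.2 δ'' hδ'')
    rcases le_or_gt δ'' δ with hle | hgt
    · -- δ'' ≤ δ : δ'' ∈ D
      have hδ''D : δ'' ∈ D := ⟨hδ'', hle⟩
      have hbnds : ∀ d' : ↥D, ∃ i₁, i₁ < om1 ∧ (d'.1 ≠ δ'' → ∀ i, i < om1 →
          (∃ j, j < om1 ∧ η d'.1 j = η δ'' i) → i < i₁) := by
        intro d'
        by_cases h : d'.1 ≠ δ''
        · obtain ⟨i₁, h1, h2⟩ := hover δ'' hδ'' d'.1 d'.2 h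
          exact ⟨i₁, h1, fun _ => h2⟩
        · exact ⟨0, om1_pos, fun hc => absurd hc h⟩
      choose f hf1 hf2 using hbnds
      set g : Ordinal → Ordinal := fun ζ =>
        if h : ∃ dd : ↥D, ι dd.1 = ζ then f h.choose else 0 with hgdef
      set B : Ordinal := Ordinal.bsup (ι δ'') (fun ζ _ => g ζ) with hBdef
      have hB : B < om1 := by
        apply Ordinal.bsup_lt_ord
        · rw [show om1.cof = Cardinal.aleph 1 from
            Cardinal.isRegular_aleph_one.cof_eq]
          exact Cardinal.lt_ord.1 (hιlt δ'' hδ''D)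
        · intro ζ hζ
          simp only [hgdef]
          split
          · exact hf1 _
          · exact om1_pos
      refine nonStatIn_of_bound (max βp B) (max_lt hβp hB) ?_
      rintro i hiβ hiom1 ⟨-, hiE, b, hqb, hbc⟩
      by_cases hpα : p (η δ'' i) = none
      · have hα : η δ'' i < δ := lt_of_lt_of_le (hlt δ'' hδ'' i hiom1) hle
        have hq1 : q (η δ'' i) = some (val (η δ'' i)) := hqnew _ hpα hα
        have hb1 : b = val (η δ'' i) := by
          rw [hq1] at hqb
          exact (Option.some_injective _ hqb).symm
        rcases hval δ'' hδ'' hle i hiom1 with hgood | ⟨d', hd'D, hne, hι, j, hj, hji⟩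
        · exact hbc (hb1.trans hgood)
        · have hfi : i < f ⟨d', hd'D⟩ := hf2 ⟨d', hd'D⟩ hne i hiom1 ⟨j, hj, hji⟩
          have hg : g (ι d') = f ⟨d', hd'D⟩ := by
            have hex2 : ∃ dd : ↥D, ι dd.1 = ι d' := ⟨⟨d', hd'D⟩, rfl⟩
            simp only [hgdef, dif_pos hex2]
            congr 1
            exact Subtype.ext (hιinj _ hex2.choose.2 _ hd'D hex2.choose_spec)
          have hgB : g (ι d') ≤ B := Ordinal.le_bsup _ (ι d') hι
          have : i < B := lt_of_lt_of_le (hg ▸ hfi) hgB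
          exact absurd this (not_lt.2 ((le_max_right βp B).trans hiβ))
      · have hq1 : q (η δ'' i) = p (η δ'' i) := hqp _ hpα
        exact hβpall i ((le_max_left βp B).trans hiβ) hiom1
          ⟨hiom1, hiE, b, hq1 ▸ hqb, hbc⟩
    · -- δ < δ''
      obtain ⟨i₁, hi₁, hile⟩ := hcofinal δ'' hδ'' δ hgt
      refine nonStatIn_of_bound (max βp i₁) (max_lt hβp hi₁) ?_
      rintro i hiβ hiom1 ⟨-, hiE, b, hqb, hbc⟩
      by_cases hpα : p (η δ'' i) = none
      · by_cases hα : η δ'' i < δ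
        · have h1 : η δ'' i < η δ'' i₁ := hα.trans_le hile
          have h2 : i < i₁ := hltrev δ'' hδ'' i i₁ hi₁ hiom1 h1
          exact absurd h2 (not_lt.2 ((le_max_right βp i₁).trans hiβ))
        · rw [hqout _ hpα hα] at hqb
          cases hqb
      · have hq1 : q (η δ'' i) = p (η δ'' i) := hqp _ hpα
        exact hβpall i ((le_max_left βp i₁).trans hiβ) hiom1
          ⟨hiom1, hiE, b, hq1 ▸ hqb, hbc⟩
  refine ⟨q, ⟨?_, ?_, hC3⟩, ?_, ?_, ?_⟩
  · -- domain inside om2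
    intro α hα
    by_cases h : p α = none
    · by_cases hαδ : α < δ
      · exact hαδ.trans hδ2
      · exact absurd (hqout α h hαδ) hα
    · exact hp.1 α (fun hh => h (by rw [← hqp α h] at hh ⊢; exact hh))
  · -- cardinality
    have hsub : {α | q α ≠ none} ⊆ {α | p α ≠ none} ∪ Set.Iio δ := by
      intro α hα
      by_cases h : p α = none
      · right
        by_contra hcon
        exact hα (hqout α h hcon)
      · left
        exact h
    calc Cardinal.mk ↥{α | q α ≠ none}
        ≤ Cardinal.mk ↥({α | p α ≠ none} ∪ Set.Iio δ) := Cardinal.mk_le_mk_of_subset hsub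
      _ ≤ Cardinal.mk ↥{α | p α ≠ none} + Cardinal.mk ↥(Set.Iio δ) :=
          Cardinal.mk_union_le _ _
      _ ≤ Cardinal.aleph 1 + Cardinal.aleph 1 := by
          refine add_le_add hp.2.1 ?_
          rw [Ordinal.mk_Iio_ordinal]
          calc Cardinal.lift.{_+1} δ.card ≤ Cardinal.lift (Cardinal.aleph 1) :=
                Cardinal.lift_le.2 (hcard_le δ hδ2)
            _ = Cardinal.aleph 1 := by
                rw [Cardinal.lift_aleph, Ordinal.lift_one]
      _ = Cardinal.aleph 1 := Cardinal.add_eq_self (Cardinal.aleph0_le_aleph 1)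
  · -- extends
    intro α b hb
    rw [hqp α (by rw [hb]; exact Option.some_ne_none _), hb]
  · -- covers δ
    intro β hβ
    by_cases h : p β = none
    · rw [hqnew β h hβ]
      exact Option.some_ne_none _
    · rw [hqp β h]
      exact h
  · -- covers the ladder of δ
    intro i hi
    have hβ : η δ i < δ := hlt δ hδ i hi
    by_cases h : p (η δ i) = none
    · rw [hqnew _ h hβ]
      exact Option.some_ne_none _
    · rw [hqp _ h]
      exact h
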